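/- Let X be a Banach space and u ∈ W^{1,p}(ℝⁿ; X) for 1 ≤ p < ∞. For x in a dyadic cube Q of side length 2^k and any m ∈ ℤⁿ, one has the pointwise identity u(x) − ⟨u⟩_{Q+2^k m} = ∫_{[-1,1]ⁿ} ∫_0^1 −2^k(m+z)·∇u(x + t·2^k(m+z)) dt · 1_Q(x + 2^k z) dz, where ⟨u⟩_R denotes the average of u over the set R. Consequently, ‖u − ⟨u⟩_{Q+2^k m}‖ on Q is controlled by averages of translates of 2^k(m+z)·∇u. -/

import Mathlib

open MeasureTheory
open scoped ENNReal

noncomputable section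

def dyadicCube (n : ℕ) (k : ℤ) (m : Fin n → ℤ) : Set (Fin n → ℝ) :=
  {x | ∀ i, (2 : ℝ) ^ k * (m i : ℝ) ≤ x i ∧ x i < (2 : ℝ) ^ k * ((m i : ℝ) + 1)}

def setAvg (n : ℕ) {X : Type*} [NormedAddCommGroup X] [NormedSpace ℝ X]
    (S : Set (Fin n → ℝ)) (u : (Fin n → ℝ) → X) : X :=
  ((volume S).toReal)⁻¹ • ∫ y in S, u y

lemma dyadicCube_eq (n : ℕ) (k : ℤ) (m : Fin n → ℤ) :
    dyadicCube n k m = Set.pi Set.univ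
      (fun i => Set.Ico ((2:ℝ)^k * (m i : ℝ)) ((2:ℝ)^k * ((m i : ℝ) + 1))) := by
  ext x; simp [dyadicCube, Set.mem_pi, Set.mem_Ico]

lemma measurableSet_dyadicCube (n : ℕ) (k : ℤ) (m : Fin n → ℤ) :
    MeasurableSet (dyadicCube n k m) := by
  rw [dyadicCube_eq]; exact MeasurableSet.univ_pi fun i => measurableSet_Ico

lemma volume_dyadicCube (n : ℕ) (k : ℤ) (m : Fin n → ℤ) :
    volume (dyadicCube n k m) = ENNReal.ofReal ((2:ℝ)^k) ^ n := by
  rw [dyadicCube_eq, volume_pi_pi]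
  have : ∀ i : Fin n, volume (Set.Ico ((2:ℝ)^k * (m i : ℝ)) ((2:ℝ)^k * ((m i : ℝ) + 1)))
      = ENNReal.ofReal ((2:ℝ)^k) := by
    intro i; rw [Real.volume_Ico]; ring_nf
  simp [this]

lemma ftc_line {X : Type*} [NormedAddCommGroup X] [NormedSpace ℝ X] [CompleteSpace X] {n : ℕ}
    {u : (Fin n → ℝ) → X} (hu : ContDiff ℝ 1 u) (x v : Fin n → ℝ) :
    ∫ t in (0:ℝ)..1, -(fderiv ℝ u (x + t • v) v) = u x - u (x + v) := by
  have hγ : Continuous fun t : ℝ => x + t • v := by continuity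
  have hderiv : ∀ t ∈ Set.uIcc (0:ℝ) 1,
      HasDerivAt (fun t : ℝ => u (x + t • v)) (fderiv ℝ u (x + t • v) v) t := by
    intro t _
    have h1 : HasDerivAt (fun t : ℝ => x + t • v) v t := by
      simpa using ((hasDerivAt_id t).smul_const v).const_add x
    have h2 := (hu.differentiable one_ne_zero (x + t • v)).hasFDerivAt
    exact h2.comp_hasDerivAt t h1
  have hcont : IntervalIntegrable (fun t => fderiv ℝ u (x + t • v) v) volume 0 1 :=
    (((hu.continuous_fderiv one_ne_zero).comp hγ).clm_apply continuous_const).intervalIntegrable 0 1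
  rw [intervalIntegral.integral_neg,
    intervalIntegral.integral_eq_sub_of_hasDerivAt hderiv hcont]
  simp [neg_sub]

/-- Pointwise Poincaré identity: for `u ∈ W^{1,p}(ℝⁿ;X)` (encoded as a differentiable
function which together with its gradient belongs to `L^p`), `x` in a dyadic cube `Q` of
side `2^k`, and `m ∈ ℤⁿ`, one has
`u(x) − ⟨u⟩_{Q+2^k m} = ∫_{[-1,1]ⁿ} (∫_0^1 −2^k(m+z)·∇u(x+t·2^k(m+z)) dt) 1_Q(x+2^k z) dz`. -/
theorem poincare_pointwise_identity
    {X : Type*} [NormedAddCommGroup X] [NormedSpace ℝ X] [CompleteSpace X]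
    (n : ℕ) (p : ℝ) (hp : 1 ≤ p)
    (u : (Fin n → ℝ) → X) (hu : ContDiff ℝ 1 u)
    (hup : MemLp u (ENNReal.ofReal p) volume)
    (hgradp : MemLp (fun x => fderiv ℝ u x) (ENNReal.ofReal p) volume)
    (k : ℤ) (m₀ m : Fin n → ℤ) (x : Fin n → ℝ)
    (hx : x ∈ dyadicCube n k m₀) :
    u x - setAvg n ((fun y => y + (2 : ℝ) ^ k • (fun i => (m i : ℝ))) '' dyadicCube n k m₀) u
      = ∫ z in Set.pi Set.univ (fun _ : Fin n => Set.Icc (-1 : ℝ) 1),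
          (Set.indicator (dyadicCube n k m₀) (fun _ => (1 : ℝ)) (x + (2 : ℝ) ^ k • z)) •
            (∫ t in (0 : ℝ)..1,
              -(fderiv ℝ u (x + (t * (2 : ℝ) ^ k) • ((fun i => (m i : ℝ)) + z))
                  ((2 : ℝ) ^ k • ((fun i => (m i : ℝ)) + z)))) := by
  classical
  set c : ℝ := (2:ℝ)^k with hc_def
  have hc : 0 < c := by positivity
  set M : Fin n → ℝ := fun i => (m i : ℝ) with hM
  set Q := dyadicCube n k m₀ with hQ
  set a : Fin n → ℝ := c • M with ha
  set g : (Fin n → ℝ) → X :=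
    fun w => Set.indicator Q (fun _ => (1:ℝ)) w • (u x - u (w + a)) with hg
  have step1 : ∀ z : Fin n → ℝ,
      (Set.indicator Q (fun _ => (1:ℝ)) (x + c • z)) •
        (∫ t in (0:ℝ)..1, -(fderiv ℝ u (x + (t * c) • (M + z)) (c • (M + z))))
      = g (x + c • z) := by
    intro z
    have h1 : ∀ t : ℝ, x + (t * c) • (M + z) = x + t • (c • (M + z)) := by
      intro t; rw [smul_smul, mul_comm]
    have h2 : (∫ t in (0:ℝ)..1, -(fderiv ℝ u (x + (t * c) • (M + z)) (c • (M + z))))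
        = u x - u (x + c • (M + z)) := by
      simp_rw [h1]; exact ftc_line hu x (c • (M + z))
    rw [h2, hg]
    have h3 : x + c • (M + z) = (x + c • z) + a := by
      rw [ha, smul_add]; abel
    rw [h3]
  have step2 : ∀ z ∉ Set.pi Set.univ (fun _ : Fin n => Set.Icc (-1:ℝ) 1),
      g (x + c • z) = 0 := by
    intro z hz
    have hnot : x + c • z ∉ Q := by
      intro hmem
      apply hz
      intro i _
      have h1 : c * (m₀ i : ℝ) ≤ x i ∧ x i < c * ((m₀ i : ℝ) + 1) := hx i
      have h2 : c * (m₀ i : ℝ) ≤ x i + c * z i ∧ x i + c * z i < c * ((m₀ i : ℝ) + 1) := by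
        simpa using hmem i
      constructor
      · nlinarith [h1.2, h2.1]
      · nlinarith [h1.1, h2.2]
    simp [hg, Set.indicator_of_notMem hnot]
  have hQmeas := measurableSet_dyadicCube n k m₀
  have volQ : volume Q = ENNReal.ofReal c ^ n := volume_dyadicCube n k m₀
  have hvolQ : (volume Q).toReal = c ^ n := by
    rw [volQ, ENNReal.toReal_pow, ENNReal.toReal_ofReal hc.le]
  have hQfin : volume Q ≠ ⊤ := by
    rw [volQ]; exact ENNReal.pow_ne_top ENNReal.ofReal_ne_top
  have hK : IsCompact (Set.pi Set.univ fun i =>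
      Set.Icc (c * (m₀ i : ℝ)) (c * ((m₀ i : ℝ) + 1))) :=
    isCompact_univ_pi fun i => isCompact_Icc
  have hQK : Q ⊆ Set.pi Set.univ fun i =>
      Set.Icc (c * (m₀ i : ℝ)) (c * ((m₀ i : ℝ) + 1)) := by
    rw [hQ, dyadicCube_eq]
    exact Set.pi_mono fun i _ => Set.Ico_subset_Icc_self
  have hint : IntegrableOn (fun w => u (w + a)) Q volume :=
    (((hu.continuous.comp (continuous_id.add continuous_const)).continuousOn.integrableOn_compact
      hK)).mono_set hQK
  have hgind : g = Q.indicator (fun w => u x - u (w + a)) := by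
    funext w; by_cases hw : w ∈ Q <;> simp [hg, hw]
  have hig : ∫ w, g w = (volume Q).toReal • u x - ∫ w in Q, u (w + a) := by
    rw [hgind, integral_indicator hQmeas,
      integral_sub (integrableOn_const hQfin enorm_ne_top : IntegrableOn (fun _ => u x) Q volume) hint, setIntegral_const, measureReal_def]
  have hT : ∫ y in (fun y => y + a) '' Q, u y = ∫ w in Q, u (w + a) :=
    (measurePreserving_add_right volume a).setIntegral_image_emb
      (measurableEmbedding_addRight a) u Q
  have hvolT : volume ((fun y => y + a) '' Q) = volume Q := by
    rw [Set.image_add_right]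
    exact measure_preimage_add_right volume (-a) Q
  have hrhs : (∫ z in Set.pi Set.univ (fun _ : Fin n => Set.Icc (-1 : ℝ) 1),
          (Set.indicator Q (fun _ => (1 : ℝ)) (x + c • z)) •
            (∫ t in (0 : ℝ)..1,
              -(fderiv ℝ u (x + (t * c) • (M + z)) (c • (M + z)))))
      = (c ^ n)⁻¹ • ((volume Q).toReal • u x - ∫ w in Q, u (w + a)) := by
    calc (∫ z in Set.pi Set.univ (fun _ : Fin n => Set.Icc (-1 : ℝ) 1),
          (Set.indicator Q (fun _ => (1 : ℝ)) (x + c • z)) •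
            (∫ t in (0 : ℝ)..1,
              -(fderiv ℝ u (x + (t * c) • (M + z)) (c • (M + z)))))
        = ∫ z in Set.pi Set.univ (fun _ : Fin n => Set.Icc (-1 : ℝ) 1), g (x + c • z) := by
          simp only [step1]
      _ = ∫ z, g (x + c • z) := setIntegral_eq_integral_of_forall_compl_eq_zero step2
      _ = (c ^ Module.finrank ℝ (Fin n → ℝ))⁻¹ • ∫ w, g (x + w) :=
          Measure.integral_comp_smul_of_nonneg volume (fun w => g (x + w)) c (hR := hc.le)
      _ = (c ^ n)⁻¹ • ∫ w, g w := by
          rw [Module.finrank_fin_fun, integral_add_left_eq_self g x]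
      _ = (c ^ n)⁻¹ • ((volume Q).toReal • u x - ∫ w in Q, u (w + a)) := by rw [hig]
  rw [hrhs, hvolQ, setAvg, hT, hvolT, hvolQ, smul_sub, smul_smul,
    inv_mul_cancel₀ (by positivity : (c:ℝ)^n ≠ 0), one_smul]
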